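/- Let F : A → B be an exceptional functor whose corestriction to a full triangulated subcategory C ⊇ im F is exceptionally Frobenius (i.e. the right and left adjoints of F|^C : A → C are isomorphic). Then C is contained in Frb F = ker(R T'). Consequently Frb F is the maximal full triangulated subcategory of B containing im F on which F becomes exceptionally Frobenius. -/

import Mathlib

open CategoryTheory Limits Pretriangulated

/-- Let `F : A ⥤ B` be an exceptional functor with adjoints
`L ⊣ F ⊣ R` and dual twist `T'`. If `C` is a full triangulated subcategory of
`B` containing `im F` such that the corestriction `G = F|^C` is exceptionally
Frobenius (fully faithful with isomorphic adjoints `Gl ⊣ G ⊣ Gr`), then `C` is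
contained in `Frb F = ker (R T')`. -/
theorem frobenius_codomain_maximal {A B : Type*} [Category A] [Category B]
    [HasZeroObject A] [HasZeroObject B] [Preadditive A] [Preadditive B]
    [HasShift A ℤ] [HasShift B ℤ]
    [∀ n : ℤ, (shiftFunctor A n).Additive] [∀ n : ℤ, (shiftFunctor B n).Additive]
    [Pretriangulated A] [Pretriangulated B]
    (F : A ⥤ B) (L R : B ⥤ A)
    [F.CommShift ℤ] [L.CommShift ℤ] [R.CommShift ℤ]
    [F.IsTriangulated] [L.IsTriangulated] [R.IsTriangulated]
    (adjL : L ⊣ F) (adjR : F ⊣ R) [F.Full] [F.Faithful]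
    (T' : B ⥤ B) (δ : T' ⟶ 𝟭 B) (γ : L ⋙ F ⟶ T' ⋙ shiftFunctor B (1 : ℤ))
    (hT' : ∀ X : B, Triangle.mk (δ.app X) (adjL.unit.app X) (γ.app X) ∈ distTriang B)
    -- C is a full triangulated subcategory of B containing im F
    (Cmem : B → Prop)
    (hC_iso : ∀ (X Y : B), Cmem X → (X ≅ Y) → Cmem Y)
    (hC_shift : ∀ (X : B) (n : ℤ), Cmem X → Cmem (X⟦n⟧))
    (hC_tri : ∀ T : Triangle B, (T ∈ distTriang B) → Cmem T.obj₁ → Cmem T.obj₂ →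
      Cmem T.obj₃)
    (hC_im : ∀ a : A, Cmem (F.obj a))
    -- the corestriction G = F|^C and the comparison with F
    (G : A ⥤ ObjectProperty.FullSubcategory Cmem) [G.Full] [G.Faithful]
    (hG : G ⋙ ObjectProperty.ι Cmem ≅ F)
    -- G is exceptionally Frobenius: both adjoints exist and are isomorphic
    (Gl Gr : ObjectProperty.FullSubcategory Cmem ⥤ A)
    (adjGl : Gl ⊣ G) (adjGr : G ⊣ Gr) (α : Gr ≅ Gl) :
    ∀ X : B, Cmem X → IsZero (R.obj (T'.obj X)) := by
  intro X hX
  set ι := ObjectProperty.ι Cmem with hι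
  -- T'.obj X belongs to C
  have hT'X : Cmem (T'.obj X) := by
    have hrot := rot_of_distTriang _ (hT' X)
    have h1 : Cmem ((T'.obj X)⟦(1 : ℤ)⟧) := hC_tri _ hrot hX (hC_im (L.obj X))
    exact hC_iso _ _ (hC_shift _ (-1) h1) (shiftShiftNeg (T'.obj X) 1)
  -- L of the unit is an isomorphism
  have hcounit : IsIso (adjL.counit.app (L.obj X)) := inferInstance
  have hunit : IsIso (L.map (adjL.unit.app X)) := by
    have h := adjL.left_triangle_components X
    have h2 : IsIso (L.map (adjL.unit.app X) ≫ adjL.counit.app (L.obj X)) := by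
      rw [h]; exact IsIso.id _
    exact IsIso.of_isIso_comp_right _ (adjL.counit.app (L.obj X))
  -- L kills T'
  have hLzero : IsZero (L.obj (T'.obj X)) := by
    have hdist := L.map_distinguished _ (hT' X)
    exact Triangle.isZero₁_of_isIso₂ _ hdist hunit
  -- adjunction G ⊣ ι ⋙ R
  have adjGR' : G ⊣ ι ⋙ R :=
    adjR.restrictFullyFaithful (Functor.FullyFaithful.id A)
      (ObjectProperty.fullyFaithfulι Cmem)
      (Functor.leftUnitor F ≪≫ hG.symm) ((ι ⋙ R).rightUnitor).symm
  -- adjunction ι ⋙ L ⊣ G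
  have adjLG' : ι ⋙ L ⊣ G :=
    adjL.restrictFullyFaithful (ObjectProperty.fullyFaithfulι Cmem)
      (Functor.FullyFaithful.id A)
      ((ι ⋙ L).rightUnitor).symm (Functor.leftUnitor F ≪≫ hG.symm)
  have e1 : Gr ≅ ι ⋙ R := adjGr.rightAdjointUniq adjGR'
  have e2 : ι ⋙ L ≅ Gl := adjLG'.leftAdjointUniq adjGl
  -- assemble the isomorphism R (T' X) ≅ L (T' X)
  let Y : ObjectProperty.FullSubcategory Cmem := ⟨T'.obj X, hT'X⟩
  have iso : L.obj (T'.obj X) ≅ R.obj (T'.obj X) :=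
    (e2 ≪≫ α.symm ≪≫ e1).app Y
  exact hLzero.of_iso iso.symm
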